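/- arXiv:1108.2579 — 2 statements merged into one kernel-verified Lean document; each statement's English description precedes it below -/
import Mathlib

section
/- Let m ≥ 2 and n ≥ 1 be integers and a an integer with gcd(a, mn) = 1 (and mn ≥ 2). Then C_m(a) divides n · C_{mn}(a). -/
/-- The Carmichael function `λ(m)`: the smallest positive integer `n` such that
`a ^ n ≡ 1 (mod m)` for every integer `a` coprime to `m`. -/
noncomputable def carmichael (m : ℕ) : ℕ :=
  sInf {n : ℕ | 0 < n ∧ ∀ a : ℤ, Int.gcd a m = 1 → a ^ n ≡ 1 [ZMOD (m : ℤ)]}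

/-- The Carmichael quotient `C_m(a) = (a^{λ(m)} - 1) / m`. -/
noncomputable def carQuot (m : ℕ) (a : ℤ) : ℤ := (a ^ carmichael m - 1) / m

lemma isUnit_of_gcd {m : ℕ} {a : ℤ} (h : Int.gcd a m = 1) : IsUnit (a : ZMod m) := by
  have hc : IsCoprime a (m : ℤ) := Int.isCoprime_iff_gcd_eq_one.mpr h
  have := hc.map (Int.castRingHom (ZMod m))
  simpa using isCoprime_zero_right.mp (by simpa using this)

lemma totient_mem (m : ℕ) (hm : 0 < m) :
    Nat.totient m ∈ {n : ℕ | 0 < n ∧ ∀ a : ℤ, Int.gcd a m = 1 → a ^ n ≡ 1 [ZMOD (m : ℤ)]} := by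
  refine ⟨Nat.totient_pos.mpr hm, fun a ha => ?_⟩
  have hu := isUnit_of_gcd ha
  rw [← ZMod.intCast_eq_intCast_iff]
  push_cast
  have := ZMod.pow_totient hu.unit
  calc (a : ZMod m) ^ Nat.totient m = ((hu.unit ^ Nat.totient m : (ZMod m)ˣ) : ZMod m) := by
        rw [Units.val_pow_eq_pow_val, hu.unit_spec]
    _ = 1 := by rw [this]; rfl

lemma carmichael_spec (m : ℕ) (hm : 0 < m) :
    0 < carmichael m ∧ ∀ a : ℤ, Int.gcd a m = 1 → a ^ carmichael m ≡ 1 [ZMOD (m : ℤ)] :=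
  Nat.sInf_mem ⟨_, totient_mem m hm⟩

lemma carmichael_dvd (m : ℕ) (hm : 0 < m) (k : ℕ) (hk : 0 < k)
    (h : ∀ a : ℤ, Int.gcd a m = 1 → a ^ k ≡ 1 [ZMOD (m : ℤ)]) : carmichael m ∣ k := by
  obtain ⟨hLpos, hL⟩ := carmichael_spec m hm
  set L := carmichael m with hLdef
  have hr : ∀ a : ℤ, Int.gcd a m = 1 → a ^ (k % L) ≡ 1 [ZMOD (m : ℤ)] := by
    intro a ha
    have h1 := h a ha
    have h2 := hL a ha
    have hek : a ^ k = (a ^ L) ^ (k / L) * a ^ (k % L) := by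
      rw [← pow_mul, ← pow_add, Nat.div_add_mod]
    have h3 : (a ^ L) ^ (k / L) * a ^ (k % L) ≡ 1 ^ (k / L) * a ^ (k % L) [ZMOD (m : ℤ)] :=
      (h2.pow (k / L)).mul (Int.ModEq.refl _)
    have h4 : a ^ (k % L) ≡ a ^ k [ZMOD (m : ℤ)] := by
      rw [hek]; simpa using h3.symm
    exact h4.trans h1
  rcases Nat.eq_zero_or_pos (k % L) with h0 | hpos
  · exact Nat.dvd_of_mod_eq_zero h0
  · exfalso
    have hmem : k % L ∈ {n : ℕ | 0 < n ∧ ∀ a : ℤ, Int.gcd a m = 1 → a ^ n ≡ 1 [ZMOD (m : ℤ)]} :=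
      ⟨hpos, hr⟩
    have hle : carmichael m ≤ k % L := Nat.sInf_le hmem
    have hlt := Nat.mod_lt k hLpos
    omega

lemma carmichael_dvd_mul (m n : ℕ) (hm : 0 < m) (hn : 0 < n) :
    carmichael m ∣ carmichael (m * n) := by
  have hmn : 0 < m * n := Nat.mul_pos hm hn
  haveI : NeZero (m * n) := ⟨hmn.ne'⟩
  obtain ⟨hMpos, hM⟩ := carmichael_spec (m * n) hmn
  refine carmichael_dvd m hm _ hMpos ?_
  intro a ha
  set M := carmichael (m * n) with hMdef
  have hu := isUnit_of_gcd ha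
  have hdvd : m ∣ m * n := Dvd.intro n rfl
  obtain ⟨v, hv⟩ := ZMod.unitsMap_surjective hdvd hu.unit
  -- the integer b lifts a and is coprime to m * n
  set b : ℤ := ((v : ZMod (m * n)).val : ℤ) with hbdef
  have hbcop : Int.gcd b ((m * n : ℕ) : ℤ) = 1 := by
    rw [hbdef, Int.gcd_natCast_natCast]
    exact ZMod.val_coe_unit_coprime v
  have hbM := hM b (by exact_mod_cast hbcop)
  have hbZ : ((b : ℤ) : ZMod (m * n)) = (v : ZMod (m * n)) := by
    simp [hbdef, ZMod.natCast_val, ZMod.cast_id]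
  have hvM : v ^ M = 1 := by
    apply Units.ext
    have : ((b : ℤ) : ZMod (m * n)) ^ M = 1 := by
      rw [← ZMod.intCast_eq_intCast_iff] at hbM
      push_cast at hbM
      simpa using hbM
    rw [hbZ] at this
    simpa using this
  have huM : hu.unit ^ M = 1 := by
    rw [← hv, ← map_pow, hvM, map_one]
  rw [← ZMod.intCast_eq_intCast_iff]
  push_cast
  calc (a : ZMod m) ^ M = ((hu.unit ^ M : (ZMod m)ˣ) : ZMod m) := by
        rw [Units.val_pow_eq_pow_val, hu.unit_spec]
    _ = 1 := by rw [huM]; rfl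

theorem stmt5 (m n : ℕ) (hm : 2 ≤ m) (hn : 1 ≤ n) (a : ℤ) (ha : Int.gcd a (m * n) = 1) :
    carQuot m a ∣ (n : ℤ) * carQuot (m * n) a := by
  have hm0 : 0 < m := by omega
  have hn0 : 0 < n := hn
  have hmn0 : 0 < m * n := Nat.mul_pos hm0 hn0
  have ham : Int.gcd a m = 1 :=
    Nat.eq_one_of_dvd_one (ha ▸ Int.gcd_dvd_gcd_mul_right_right a m n)
  obtain ⟨k, hk⟩ := carmichael_dvd_mul m n hm0 hn0
  set L := carmichael m
  set M := carmichael (m * n)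
  have h1 : (m : ℤ) ∣ a ^ L - 1 := by
    have := ((carmichael_spec m hm0).2 a ham).dvd
    simpa using (dvd_neg.mpr this)
  have h2 : ((m * n : ℕ) : ℤ) ∣ a ^ M - 1 := by
    have := ((carmichael_spec (m * n) hmn0).2 a ha).dvd
    simpa using (dvd_neg.mpr this)
  have h3 : a ^ L - 1 ∣ a ^ M - 1 := by
    have := sub_dvd_pow_sub_pow (a ^ L) 1 k
    simpa [← pow_mul, ← hk] using this
  obtain ⟨s, hs⟩ := h1
  obtain ⟨t, ht⟩ := h3
  obtain ⟨c, hc⟩ := h2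
  have hmz : (m : ℤ) ≠ 0 := by exact_mod_cast hm0.ne'
  have hq1 : carQuot m a = s := by
    rw [carQuot, hs, Int.mul_ediv_cancel_left _ hmz]
  have hq2 : carQuot (m * n) a = c := by
    rw [carQuot]
    push_cast
    rw [show a ^ M - 1 = (m : ℤ) * n * c by exact_mod_cast hc,
      Int.mul_ediv_cancel_left _ (by positivity)]
  have hst : s * t = (n : ℤ) * c := by
    have : (m : ℤ) * (s * t) = (m : ℤ) * ((n : ℤ) * c) := by
      have e1 : (m : ℤ) * (s * t) = a ^ M - 1 := by rw [ht, hs]; ring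
      have e2 : (m : ℤ) * ((n : ℤ) * c) = a ^ M - 1 := by
        rw [hc]; push_cast; ring
      rw [e1, e2]
    exact mul_left_cancel₀ hmz this
  rw [hq1, hq2, ← hst]
  exact Dvd.intro t rfl
end

section
/- Let m ≥ 2 and n ≥ 2 be integers with gcd(m, n) = 1, let a be an integer with gcd(a, mn) = 1, and let X, Y be integers satisfying m²X + n²Y = 1. Then C_{mn}(a) ≡ (n·λ(n)/gcd(λ(m), λ(n)))·Y·C_m(a) + (m·λ(m)/gcd(λ(m), λ(n)))·X·C_n(a) (mod mn). -/
lemma modeq_iff_pow (m : ℕ) (a : ℤ) (k : ℕ) :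
    a ^ k ≡ 1 [ZMOD (m : ℤ)] ↔ ((a : ZMod m)) ^ k = 1 := by
  rw [← ZMod.intCast_eq_intCast_iff]
  push_cast
  rfl

lemma exponent_mem (m : ℕ) [NeZero m] :
    Monoid.exponent (ZMod m)ˣ ∈
      {n : ℕ | 0 < n ∧ ∀ a : ℤ, Int.gcd a m = 1 → a ^ n ≡ 1 [ZMOD (m : ℤ)]} := by
  refine ⟨Monoid.exponent_pos.mpr Monoid.ExponentExists.of_finite, fun a hga => ?_⟩
  rw [modeq_iff_pow]
  obtain ⟨u, hu⟩ := isUnit_of_gcd hga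
  rw [← hu, ← Units.val_pow_eq_pow_val, Monoid.pow_exponent_eq_one, Units.val_one]

lemma carmichael_mem (m : ℕ) [NeZero m] :
    0 < carmichael m ∧ ∀ a : ℤ, Int.gcd a m = 1 → a ^ carmichael m ≡ 1 [ZMOD (m : ℤ)] :=
  Nat.sInf_mem ⟨_, exponent_mem m⟩

lemma carmichael_eq_exponent (m : ℕ) [NeZero m] :
    carmichael m = Monoid.exponent (ZMod m)ˣ := by
  have h1 : carmichael m ≤ Monoid.exponent (ZMod m)ˣ := Nat.sInf_le (exponent_mem m)
  have h2 := carmichael_mem m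
  have hdvd : Monoid.exponent (ZMod m)ˣ ∣ carmichael m := by
    apply Monoid.exponent_dvd_of_forall_pow_eq_one
    intro u
    have hg : Int.gcd ((ZMod.val (u : ZMod m) : ℤ)) m = 1 := by
      simpa only [Int.gcd, Int.natAbs_natCast] using (ZMod.val_coe_unit_coprime u)
    have h3 := h2.2 _ hg
    rw [modeq_iff_pow] at h3
    have hv : (((ZMod.val (u : ZMod m) : ℤ)) : ZMod m) = (u : ZMod m) := by
      push_cast
      simp [ZMod.natCast_val, ZMod.cast_id]
    rw [hv] at h3
    ext
    simpa using h3
  exact le_antisymm h1 (Nat.le_of_dvd h2.1 hdvd)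

lemma carmichael_mul (m n : ℕ) [NeZero m] [NeZero n] (h : Nat.Coprime m n) :
    carmichael (m * n) = Nat.lcm (carmichael m) (carmichael n) := by
  haveI : NeZero (m * n) := ⟨mul_ne_zero (NeZero.ne m) (NeZero.ne n)⟩
  rw [carmichael_eq_exponent, carmichael_eq_exponent, carmichael_eq_exponent,
    Monoid.exponent_eq_of_mulEquiv
      ((Units.mapEquiv (ZMod.chineseRemainder h).toMulEquiv).trans MulEquiv.prodUnits),
    Monoid.exponent_prod]
  rfl

lemma binom_aux (x : ℤ) (k : ℕ) : ∃ c : ℤ, (1 + x) ^ k - (1 + k * x) = x ^ 2 * c := by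
  induction k with
  | zero => exact ⟨0, by simp⟩
  | succ k ih =>
    obtain ⟨c, hc⟩ := ih
    refine ⟨(1 + x) * c + k, ?_⟩
    push_cast [pow_succ]
    linear_combination (1 + x) * hc

theorem stmt7 (m n : ℕ) (hm : 2 ≤ m) (hn : 2 ≤ n) (hmn : Nat.gcd m n = 1)
    (a : ℤ) (ha : Int.gcd a (m * n) = 1)
    (X Y : ℤ) (hXY : (m : ℤ) ^ 2 * X + (n : ℤ) ^ 2 * Y = 1) :
    carQuot (m * n) a ≡
      ((n * carmichael n / Nat.gcd (carmichael m) (carmichael n) : ℕ) : ℤ) * Y * carQuot m a +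
        ((m * carmichael m / Nat.gcd (carmichael m) (carmichael n) : ℕ) : ℤ) * X *
          carQuot n a [ZMOD ((m : ℤ) * n)] := by
  haveI : NeZero m := ⟨by omega⟩
  haveI : NeZero n := ⟨by omega⟩
  haveI : NeZero (m * n) := ⟨by positivity⟩
  have hco : Nat.Coprime m n := hmn
  have hca : IsCoprime a ((m : ℤ) * (n : ℤ)) := Int.isCoprime_iff_gcd_eq_one.mpr ha
  have ham : Int.gcd a m = 1 := Int.isCoprime_iff_gcd_eq_one.mp hca.of_mul_right_left
  have han : Int.gcd a n = 1 := Int.isCoprime_iff_gcd_eq_one.mp hca.of_mul_right_right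
  have hamn : Int.gcd a ((m * n : ℕ) : ℤ) = 1 := by push_cast; exact ha
  set g := Nat.gcd (carmichael m) (carmichael n) with hg
  set kn := carmichael n / g with hkn
  set km := carmichael m / g with hkm
  -- divisibility facts
  have hdm : (m : ℤ) ∣ a ^ carmichael m - 1 :=
    dvd_sub_comm.mp (Int.modEq_iff_dvd.mp ((carmichael_mem m).2 a ham))
  have hdn : (n : ℤ) ∣ a ^ carmichael n - 1 :=
    dvd_sub_comm.mp (Int.modEq_iff_dvd.mp ((carmichael_mem n).2 a han))
  have hdmn : ((m * n : ℕ) : ℤ) ∣ a ^ carmichael (m * n) - 1 :=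
    dvd_sub_comm.mp (Int.modEq_iff_dvd.mp ((carmichael_mem (m * n)).2 a hamn))
  have hCm : (m : ℤ) * carQuot m a = a ^ carmichael m - 1 := by
    rw [carQuot]; exact Int.mul_ediv_cancel' hdm
  have hCn : (n : ℤ) * carQuot n a = a ^ carmichael n - 1 := by
    rw [carQuot]; exact Int.mul_ediv_cancel' hdn
  have hCmn : ((m : ℤ) * n) * carQuot (m * n) a = a ^ carmichael (m * n) - 1 := by
    rw [carQuot]
    push_cast
    push_cast at hdmn
    exact Int.mul_ediv_cancel' hdmn
  -- lcm decompositions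
  have hlcm1 : carmichael (m * n) = carmichael m * kn := by
    rw [carmichael_mul m n hco, Nat.lcm, hkn, hg,
      Nat.mul_div_assoc _ (Nat.gcd_dvd_right (carmichael m) (carmichael n))]
  have hlcm2 : carmichael (m * n) = carmichael n * km := by
    rw [carmichael_mul m n hco, Nat.lcm_comm, Nat.lcm, hkm, hg, Nat.gcd_comm (carmichael n),
      Nat.mul_div_assoc _ (Nat.gcd_dvd_left (carmichael m) (carmichael n))]
  -- binomial expansions
  obtain ⟨t, ht⟩ := binom_aux ((m : ℤ) * carQuot m a) kn
  obtain ⟨s, hs⟩ := binom_aux ((n : ℤ) * carQuot n a) km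
  have key1 : a ^ carmichael (m * n) - 1 =
      (kn : ℤ) * ((m : ℤ) * carQuot m a) + ((m : ℤ) * carQuot m a) ^ 2 * t := by
    rw [hlcm1, pow_mul, show a ^ carmichael m = 1 + (m : ℤ) * carQuot m a by
      linarith [hCm]]
    linear_combination ht
  have key2 : a ^ carmichael (m * n) - 1 =
      (km : ℤ) * ((n : ℤ) * carQuot n a) + ((n : ℤ) * carQuot n a) ^ 2 * s := by
    rw [hlcm2, pow_mul, show a ^ carmichael n = 1 + (n : ℤ) * carQuot n a by
      linarith [hCn]]
    linear_combination hs
  have hm0 : (m : ℤ) ≠ 0 := by exact_mod_cast NeZero.ne m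
  have hn0 : (n : ℤ) ≠ 0 := by exact_mod_cast NeZero.ne n
  have e1 : (n : ℤ) * carQuot (m * n) a =
      (kn : ℤ) * carQuot m a + (m : ℤ) * (carQuot m a ^ 2 * t) :=
    mul_left_cancel₀ hm0 (by linear_combination hCmn + key1)
  have e2 : (m : ℤ) * carQuot (m * n) a =
      (km : ℤ) * carQuot n a + (n : ℤ) * (carQuot n a ^ 2 * s) :=
    mul_left_cancel₀ hn0 (by linear_combination hCmn + key2)
  have hc1 : n * carmichael n / g = n * kn :=
    Nat.mul_div_assoc n (Nat.gcd_dvd_right (carmichael m) (carmichael n))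
  have hc2 : m * carmichael m / g = m * km :=
    Nat.mul_div_assoc m (Nat.gcd_dvd_left (carmichael m) (carmichael n))
  rw [Int.modEq_iff_dvd, hc1, hc2]
  refine ⟨-(X * carQuot n a ^ 2 * s + Y * carQuot m a ^ 2 * t), ?_⟩
  push_cast
  linear_combination (-(n : ℤ) * Y) * e1 + (-(m : ℤ) * X) * e2 + carQuot (m * n) a * hXY
end
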